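/- Let f : ℝ → ℝ be γ-Hölder on [0,T] with constant C > 0 (γ ∈ (0,1], T > 0), let p > 0 satisfy pγ > 1, and let X := f + J where J is the jump part with jump sizes c_1,…,c_r, not all zero, and distinct jump times τ_1,…,τ_r ∈ (0,T). Then the ratio of the 2δ-step to the δ-step p-variation of X converges to 1: lim_{δ→0+} B(X,p,2δ,T) / B(X,p,δ,T) = 1. -/

import Mathlib

open Finset Filter

/-- The `δ`-step `p`-variation of `X : ℝ → ℝ` up to horizon `T`:
`B(X,p,δ,T) = ∑_{k=1}^{⌊T/δ⌋} |X(kδ) − X((k−1)δ)|^p`. -/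
noncomputable def stepPVar (X : ℝ → ℝ) (p δ T : ℝ) : ℝ :=
  ∑ k ∈ Finset.Icc 1 ⌊T / δ⌋₊, |X ((k : ℝ) * δ) - X (((k : ℝ) - 1) * δ)| ^ p

private lemma ceil_char {t δ : ℝ} (ht : 0 < t) (hδ : 0 < δ) {k : ℕ} (hk : 1 ≤ k) :
    ⌈t / δ⌉₊ = k ↔ ((k : ℝ) - 1) * δ < t ∧ t ≤ (k : ℝ) * δ := by
  rw [Nat.ceil_eq_iff (by omega : k ≠ 0)]
  have h1 : ((k - 1 : ℕ) : ℝ) = (k : ℝ) - 1 := by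
    have h2 : (1:ℕ) ≤ k := hk
    push_cast [h2]; ring
  rw [h1, lt_div_iff₀ hδ, div_le_iff₀ hδ]

private lemma tendsto_rpow_zero' {a : ℝ} (ha : 0 < a) :
    Tendsto (fun δ : ℝ => δ ^ a) (nhdsWithin 0 (Set.Ioi 0)) (nhds 0) := by
  have h := (Real.continuousAt_rpow_const 0 a (Or.inr ha.le)).tendsto
  rw [Real.zero_rpow ha.ne'] at h
  exact h.mono_left nhdsWithin_le_nhds
/-- If `f` is `γ`-Hölder on `[0,T]` with constant `C > 0`, `pγ > 1`, and
`X = f + J` where `J = ∑_m c_m · 1_{[τ_m,∞)}` is a jump part with jump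
sizes not all zero and distinct jump times `τ_m ∈ (0,T)`, then
`B(X,p,2δ,T) / B(X,p,δ,T) → 1` as `δ → 0+`. -/
theorem pvariation_ratio_of_holder_plus_jumps
    (f : ℝ → ℝ) (γ C T p : ℝ) (hγ0 : 0 < γ) (hγ1 : γ ≤ 1) (hC : 0 < C)
    (hT : 0 < T) (hp : 0 < p) (hpγ : 1 < p * γ)
    (hf : ∀ s ∈ Set.Icc (0 : ℝ) T, ∀ t ∈ Set.Icc (0 : ℝ) T,
      |f s - f t| ≤ C * |s - t| ^ γ)
    (r : ℕ) (c τ : Fin r → ℝ) (hτinj : Function.Injective τ)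
    (hτmem : ∀ m, τ m ∈ Set.Ioo (0 : ℝ) T) (hc : ∃ m, c m ≠ 0)
    (X : ℝ → ℝ) (hX : X = fun t => f t + ∑ m, if τ m ≤ t then c m else 0) :
    Tendsto (fun δ : ℝ => stepPVar X p (2 * δ) T / stepPVar X p δ T)
      (nhdsWithin 0 (Set.Ioi 0)) (nhds 1) := by
  obtain ⟨m₀, hm₀⟩ := hc
  have hXval : ∀ t, X t = f t + ∑ m, if τ m ≤ t then c m else 0 := fun t => by rw [hX]
  set S : ℝ := ∑ m, |c m| ^ p with hS_def
  have hSpos : 0 < S := by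
    have h1 : ∀ m ∈ Finset.univ, (0:ℝ) ≤ |c m| ^ p :=
      fun m _ => Real.rpow_nonneg (abs_nonneg _) p
    have h2 : (0:ℝ) < |c m₀| ^ p := Real.rpow_pos_of_pos (abs_pos.2 hm₀) p
    calc (0:ℝ) < |c m₀| ^ p := h2
      _ ≤ S := Finset.single_le_sum h1 (Finset.mem_univ m₀)
  have key : Tendsto (fun δ => stepPVar X p δ T) (nhdsWithin 0 (Set.Ioi 0)) (nhds S) := by
    set K : Fin r → ℝ → ℕ := fun m δ => ⌈τ m / δ⌉₊ with hK_def
    set E : ℝ → ℝ := fun δ =>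
      ∑ m, |f ((K m δ : ℝ) * δ) - f (((K m δ : ℝ) - 1) * δ) + c m| ^ p with hE_def
    set F : ℝ → ℝ := fun δ =>
      ∑ k ∈ Finset.Icc 1 ⌊T / δ⌋₊ \ Finset.univ.image (fun m => K m δ),
        |f ((k : ℝ) * δ) - f (((k : ℝ) - 1) * δ)| ^ p with hF_def
    -- eventually, δ is small enough
    have hsmall : ∀ m : Fin r, ∀ᶠ δ : ℝ in nhdsWithin 0 (Set.Ioi 0), τ m + δ ≤ T := by
      intro m
      have h1 : (0:ℝ) < T - τ m := by linarith [(hτmem m).2]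
      exact ((eventually_lt_nhds h1).filter_mono nhdsWithin_le_nhds).mono
        (fun δ hδ => by linarith)
    have hsep : ∀ m m' : Fin r, ∀ᶠ δ : ℝ in nhdsWithin 0 (Set.Ioi 0),
        m ≠ m' → δ < |τ m - τ m'| := by
      intro m m'
      by_cases h : m = m'
      · exact Eventually.of_forall fun δ hne => absurd h hne
      · have h1 : 0 < |τ m - τ m'| := abs_pos.2 (sub_ne_zero.2 fun he => h (hτinj he))
        exact ((eventually_lt_nhds h1).filter_mono nhdsWithin_le_nhds).mono fun δ hδ _ => hδ
    have hev : ∀ᶠ δ : ℝ in nhdsWithin 0 (Set.Ioi 0),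
        0 < δ ∧ (∀ m, τ m + δ ≤ T) ∧ ∀ m m', m ≠ m' → δ < |τ m - τ m'| := by
      filter_upwards [eventually_mem_nhdsWithin, eventually_all.2 hsmall,
        eventually_all.2 fun m => eventually_all.2 (hsep m)] with δ h1 h2 h3
      exact ⟨h1, h2, fun m m' => h3 m m'⟩
    -- the eventual decomposition
    have heq : ∀ᶠ δ : ℝ in nhdsWithin 0 (Set.Ioi 0), stepPVar X p δ T = E δ + F δ := by
      filter_upwards [hev] with δ hδ
      obtain ⟨h0, hTs, hsp⟩ := hδ
      have hchar : ∀ (m : Fin r) (k : ℕ), 1 ≤ k →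
          (K m δ = k ↔ ((k : ℝ) - 1) * δ < τ m ∧ τ m ≤ (k : ℝ) * δ) :=
        fun m k hk => ceil_char (hτmem m).1 h0 hk
      have hK1 : ∀ m, 1 ≤ K m δ := fun m => Nat.ceil_pos.2 (div_pos (hτmem m).1 h0)
      have hKN : ∀ m, K m δ ≤ ⌊T / δ⌋₊ := by
        intro m
        refine Nat.le_floor ?_
        have h1 : (K m δ : ℝ) < τ m / δ + 1 :=
          Nat.ceil_lt_add_one (div_pos (hτmem m).1 h0).le
        have h2 : τ m / δ + 1 ≤ T / δ := by
          rw [div_add' _ _ _ h0.ne', div_le_div_iff₀ h0 h0]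
          nlinarith [hTs m]
        linarith
      have hKmem : ∀ m, K m δ ∈ Finset.Icc 1 ⌊T / δ⌋₊ :=
        fun m => Finset.mem_Icc.2 ⟨hK1 m, hKN m⟩
      have hKinj : ∀ m m', K m δ = K m' δ → m = m' := by
        intro m m' h
        by_contra hne
        have h1 := (hchar m _ (hK1 m)).1 rfl
        have h2 := (hchar m' _ (hK1 m)).1 h.symm
        have hx : ((K m δ : ℝ) - 1) * δ = (K m δ : ℝ) * δ - δ := by ring
        have habs : |τ m - τ m'| < δ := abs_sub_lt_iff.2
          ⟨by rw [hx] at h2; linarith [h1.2, h2.1], by rw [hx] at h1; linarith [h2.2, h1.1]⟩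
        linarith [hsp m m' hne]
      have hJump : ∀ k ∈ Finset.Icc 1 ⌊T / δ⌋₊,
          X ((k : ℝ) * δ) - X (((k : ℝ) - 1) * δ)
            = (f ((k : ℝ) * δ) - f (((k : ℝ) - 1) * δ))
              + ∑ m, (if K m δ = k then c m else 0) := by
        intro k hk
        have hk1 : 1 ≤ k := (Finset.mem_Icc.1 hk).1
        have hsum : (∑ m, if τ m ≤ (k:ℝ) * δ then c m else 0)
            - (∑ m, if τ m ≤ ((k:ℝ) - 1) * δ then c m else 0)
            = ∑ m, (if K m δ = k then c m else 0) := by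
          rw [← Finset.sum_sub_distrib]
          refine Finset.sum_congr rfl fun m _ => ?_
          by_cases hKk : K m δ = k
          · obtain ⟨ha, hb⟩ := (hchar m k hk1).1 hKk
            rw [if_pos hKk, if_pos hb, if_neg (not_le.2 ha)]
            ring
          · rw [if_neg hKk]
            by_cases hle : τ m ≤ ((k:ℝ) - 1) * δ
            · have hlek : ((k:ℝ) - 1) * δ ≤ (k:ℝ) * δ := by nlinarith
              rw [if_pos hle, if_pos (hle.trans hlek)]
              ring
            · have hnle : ¬ τ m ≤ (k:ℝ) * δ := fun hc2 =>
                hKk ((hchar m k hk1).2 ⟨not_le.1 hle, hc2⟩)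
              rw [if_neg hle, if_neg hnle]
              ring
        rw [hXval, hXval]
        linarith [hsum]
      have hBsum : stepPVar X p δ T
          = ∑ k ∈ Finset.Icc 1 ⌊T / δ⌋₊,
              |(f ((k:ℝ) * δ) - f (((k:ℝ) - 1) * δ))
                + ∑ m, (if K m δ = k then c m else 0)| ^ p := by
        unfold stepPVar
        exact Finset.sum_congr rfl fun k hk => by rw [hJump k hk]
      have hsub : Finset.univ.image (fun m => K m δ) ⊆ Finset.Icc 1 ⌊T / δ⌋₊ := by
        intro k hk
        obtain ⟨m, _, rfl⟩ := Finset.mem_image.1 hk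
        exact hKmem m
      simp only [hE_def, hF_def]
      rw [hBsum, ← Finset.sum_sdiff hsub, add_comm]
      congr 1
      · rw [Finset.sum_image (fun m _ m' _ h => hKinj m m' h)]
        refine Finset.sum_congr rfl fun m _ => ?_
        have hcm : (∑ m', if K m' δ = K m δ then c m' else 0) = c m := by
          rw [Finset.sum_congr rfl fun m' _ =>
            if_congr ⟨fun h => hKinj m' m h, fun h => by rw [h]⟩ rfl rfl]
          simp [Finset.sum_ite_eq']
        rw [hcm]
      · refine Finset.sum_congr rfl fun k hk => ?_
        have hk' : ∀ m, K m δ ≠ k := fun m hKk =>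
          (Finset.mem_sdiff.1 hk).2 (Finset.mem_image.2 ⟨m, Finset.mem_univ m, hKk⟩)
        rw [Finset.sum_eq_zero fun m _ => if_neg (hk' m), add_zero]
    -- Tendsto of E
    have hCγ : Tendsto (fun δ : ℝ => C * δ ^ γ) (nhdsWithin 0 (Set.Ioi 0)) (nhds 0) := by
      have h := (tendsto_rpow_zero' hγ0).const_mul C
      simpa using h
    have hE : Tendsto E (nhdsWithin 0 (Set.Ioi 0)) (nhds S) := by
      simp only [hE_def, hS_def]
      refine tendsto_finset_sum _ fun m _ => ?_
      have ha : Tendsto (fun δ => f ((K m δ : ℝ) * δ) - f (((K m δ : ℝ) - 1) * δ))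
          (nhdsWithin 0 (Set.Ioi 0)) (nhds 0) := by
        rw [tendsto_zero_iff_abs_tendsto_zero]
        refine squeeze_zero' (Eventually.of_forall fun δ => abs_nonneg _) ?_ hCγ
        filter_upwards [hev] with δ hδ
        obtain ⟨h0, hTs, _⟩ := hδ
        have hK1 : 1 ≤ K m δ := Nat.ceil_pos.2 (div_pos (hτmem m).1 h0)
        have hK1' : (1:ℝ) ≤ (K m δ : ℝ) := by exact_mod_cast hK1
        have hx1T : (K m δ : ℝ) * δ ≤ T := by
          have h1 : (K m δ : ℝ) < τ m / δ + 1 :=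
            Nat.ceil_lt_add_one (div_pos (hτmem m).1 h0).le
          have h2 : (τ m / δ + 1) * δ = τ m + δ := by field_simp
          nlinarith [hTs m]
        have hmem1 : (K m δ : ℝ) * δ ∈ Set.Icc (0:ℝ) T := ⟨mul_nonneg (Nat.cast_nonneg _) h0.le, hx1T⟩
        have hmem2 : ((K m δ : ℝ) - 1) * δ ∈ Set.Icc (0:ℝ) T :=
          ⟨by nlinarith, by nlinarith⟩
        have hb := hf _ hmem1 _ hmem2
        have hd : (K m δ : ℝ) * δ - ((K m δ : ℝ) - 1) * δ = δ := by ring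
        rw [hd, abs_of_pos h0] at hb
        simpa using hb
      have hcont : ContinuousAt (fun x : ℝ => |x + c m| ^ p) 0 :=
        (((continuous_id.add continuous_const).abs).continuousAt).rpow_const (Or.inr hp.le)
      have h := hcont.tendsto.comp ha
      simpa [Function.comp_def] using h
    -- Tendsto of F
    have hFb : Tendsto (fun δ : ℝ => T * C ^ p * δ ^ (γ * p - 1))
        (nhdsWithin 0 (Set.Ioi 0)) (nhds 0) := by
      have h := (tendsto_rpow_zero' (by nlinarith : (0:ℝ) < γ * p - 1)).const_mul (T * C ^ p)
      simpa using h
    have hF : Tendsto F (nhdsWithin 0 (Set.Ioi 0)) (nhds 0) := by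
      refine squeeze_zero' ?_ ?_ hFb
      · exact Eventually.of_forall fun δ =>
          Finset.sum_nonneg fun k _ => Real.rpow_nonneg (abs_nonneg _) p
      · filter_upwards [eventually_mem_nhdsWithin] with δ h0'
        have h0 : (0:ℝ) < δ := h0'
        have hpoint : ∀ k ∈ Finset.Icc 1 ⌊T / δ⌋₊,
            |f ((k:ℝ) * δ) - f (((k:ℝ) - 1) * δ)| ^ p ≤ (C * δ ^ γ) ^ p := by
          intro k hk
          obtain ⟨hk1, hkN⟩ := Finset.mem_Icc.1 hk
          have hk1' : (1:ℝ) ≤ (k:ℝ) := by exact_mod_cast hk1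
          have hkT : (k:ℝ) * δ ≤ T := by
            have h1 : (k:ℝ) ≤ (⌊T/δ⌋₊ : ℝ) := by exact_mod_cast hkN
            have h2 : (⌊T/δ⌋₊ : ℝ) ≤ T / δ := Nat.floor_le (div_pos hT h0).le
            have h3 : (k:ℝ) ≤ T / δ := h1.trans h2
            calc (k:ℝ) * δ ≤ (T / δ) * δ := by nlinarith
              _ = T := by field_simp
          have hmem1 : (k:ℝ) * δ ∈ Set.Icc (0:ℝ) T := ⟨mul_nonneg (Nat.cast_nonneg _) h0.le, hkT⟩
          have hmem2 : ((k:ℝ) - 1) * δ ∈ Set.Icc (0:ℝ) T := ⟨by nlinarith, by nlinarith⟩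
          refine Real.rpow_le_rpow (abs_nonneg _) ?_ hp.le
          have hb := hf _ hmem1 _ hmem2
          have hd : (k:ℝ) * δ - ((k:ℝ) - 1) * δ = δ := by ring
          rwa [hd, abs_of_pos h0] at hb
        have hCp : (0:ℝ) ≤ (C * δ ^ γ) ^ p :=
          Real.rpow_nonneg (mul_nonneg hC.le (Real.rpow_nonneg h0.le γ)) p
        have hb1 : F δ ≤ ∑ k ∈ Finset.Icc 1 ⌊T / δ⌋₊, (C * δ ^ γ) ^ p := by
          simp only [hF_def]
          refine le_trans (Finset.sum_le_sum fun k hk =>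
            hpoint k (Finset.mem_sdiff.1 hk).1) ?_
          exact Finset.sum_le_sum_of_subset_of_nonneg Finset.sdiff_subset
            (fun k _ _ => hCp)
        have hcard : (∑ _k ∈ Finset.Icc 1 ⌊T / δ⌋₊, (C * δ ^ γ) ^ p)
            = (⌊T / δ⌋₊ : ℝ) * (C * δ ^ γ) ^ p := by
          rw [Finset.sum_const, nsmul_eq_mul]
          congr 1
          simp [Nat.card_Icc]
        have hNle : (⌊T / δ⌋₊ : ℝ) ≤ T / δ := Nat.floor_le (div_pos hT h0).le
        have hval : (T / δ) * (C * δ ^ γ) ^ p = T * C ^ p * δ ^ (γ * p - 1) := by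
          rw [Real.mul_rpow hC.le (Real.rpow_nonneg h0.le γ), ← Real.rpow_mul h0.le,
            Real.rpow_sub h0, Real.rpow_one]
          field_simp
        calc F δ ≤ (⌊T / δ⌋₊ : ℝ) * (C * δ ^ γ) ^ p := by rw [← hcard]; exact hb1
          _ ≤ (T / δ) * (C * δ ^ γ) ^ p := by nlinarith
          _ = T * C ^ p * δ ^ (γ * p - 1) := hval
    have hEF := hE.add hF
    rw [add_zero] at hEF
    exact hEF.congr' (heq.mono fun δ h => h.symm)
  have h2 : Tendsto (fun δ : ℝ => 2 * δ) (nhdsWithin 0 (Set.Ioi 0))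
      (nhdsWithin 0 (Set.Ioi 0)) := by
    apply tendsto_nhdsWithin_of_tendsto_nhds_of_eventually_within
    · have hcm : Tendsto (fun δ : ℝ => 2 * δ) (nhds 0) (nhds 0) := by
        have h := (continuous_const.mul continuous_id :
          Continuous fun δ : ℝ => (2:ℝ) * δ).tendsto 0
        simpa only [Pi.mul_def, mul_zero] using h
      exact hcm.mono_left nhdsWithin_le_nhds
    · filter_upwards [eventually_mem_nhdsWithin] with δ hδ
      exact Set.mem_Ioi.2 (mul_pos two_pos hδ)
  have hB2 : Tendsto (fun δ : ℝ => stepPVar X p (2 * δ) T)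
      (nhdsWithin 0 (Set.Ioi 0)) (nhds S) := key.comp h2
  have hdiv := hB2.div key hSpos.ne'
  rwa [div_self hSpos.ne'] at hdiv
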